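/- In the treasure-digging game, under the stationary Gibbs policy $\pi^\epsilon$ of log-linear learning applied backward (stage 2 Gibbs with respect to $r_2(s,\cdot)$, stage 1 Gibbs with respect to $Q_1^{\pi^\epsilon_2}$), the limit $\pi^* = \lim_{\epsilon\to 0}\pi^\epsilon$ exists and places probability 1 on action $(1,1)$ at the initial state and at state $B$, i.e., the stochastically stable policy is the potential-maximizing (globally optimal) equilibrium with total reward $2$, not the equilibrium with reward $1.5$. -/

import Mathlib

/-! The two-stage treasure-digging game: two players, actions `{0,1}` encoded as `Bool`
(`false = 0`, `true = 1`), stage-2 states `Fin 3` (`0 = A`, `1 = O`, `2 = B`). -/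

/-- Stage-1 reward. -/
noncomputable def r1 (a : Bool × Bool) : ℝ := if a = (false, false) then 1 else 0

/-- Transition from stage 1 to the stage-2 state. -/
def nextState (a : Bool × Bool) : Fin 3 :=
  if a = (false, false) then 0 else if a = (true, true) then 2 else 1

/-- Stage-2 reward. -/
noncomputable def r2 (s : Fin 3) (a : Bool × Bool) : ℝ :=
  if s = 0 then (if a = (false, false) then 0.5 else 0)
  else if s = 1 then (if a = (false, false) then 1 else 0)
  else (if a = (false, false) then 1 else if a = (true, true) then 2 else 0)

open Finset Filter

/-- Stage-2 Gibbs (log-linear stationary) policy with respect to `r₂(s, ·)`. -/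
noncomputable def pi2 (ε : ℝ) (s : Fin 3) (a : Bool × Bool) : ℝ :=
  ε ^ (-(r2 s a)) / ∑ b : Bool × Bool, ε ^ (-(r2 s b))

/-- Stage-1 `Q`-function under the stage-2 Gibbs policy `π^ε₂`. -/
noncomputable def Q1eps (ε : ℝ) (a : Bool × Bool) : ℝ :=
  r1 a + ∑ b : Bool × Bool, pi2 ε (nextState a) b * r2 (nextState a) b

/-- Stage-1 Gibbs policy with respect to `Q₁^{π^ε₂}`. -/
noncomputable def pi1 (ε : ℝ) (a : Bool × Bool) : ℝ :=
  ε ^ (-(Q1eps ε a)) / ∑ b : Bool × Bool, ε ^ (-(Q1eps ε b))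

open Topology Real

lemma key_zero {f : ℝ → ℝ} {c : ℝ} (hc : 0 < c)
    (hf : Tendsto f (𝓝[>] (0:ℝ)) (𝓝 c)) :
    Tendsto (fun ε : ℝ => ε ^ f ε) (𝓝[>] (0:ℝ)) (𝓝 0) := by
  have hlog : Tendsto Real.log (𝓝[>] (0:ℝ)) atBot :=
    Real.tendsto_log_nhdsGT_zero
  have hmul : Tendsto (fun ε => f ε * Real.log ε) (𝓝[>] (0:ℝ)) atBot :=
    hf.pos_mul_atBot hc hlog
  have h := Real.tendsto_exp_atBot.comp hmul
  apply h.congr'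
  filter_upwards [self_mem_nhdsWithin] with ε (hε : 0 < ε)
  simp [Real.rpow_def_of_pos hε, mul_comm]

lemma gibbs_sum_lim {f : ℝ → Bool × Bool → ℝ} {F : Bool × Bool → ℝ} {a0 : Bool × Bool}
    (hf : ∀ c, Tendsto (fun ε => f ε c) (𝓝[>] (0:ℝ)) (𝓝 (F c)))
    (hmax : ∀ c, c ≠ a0 → F c < F a0) :
    Tendsto (fun ε : ℝ => ∑ c : Bool × Bool, ε ^ (f ε a0 - f ε c)) (𝓝[>] (0:ℝ)) (𝓝 1) := by
  have h1 : (1:ℝ) = ∑ c : Bool × Bool, if c = a0 then (1:ℝ) else 0 := by simp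
  rw [h1]
  apply tendsto_finset_sum
  intro c _
  by_cases hc : c = a0
  · subst hc
    simp only [if_pos rfl, sub_self]
    simpa using (tendsto_const_nhds (x := (1:ℝ)) (f := 𝓝[>] (0:ℝ))).congr
      (fun ε => (Real.rpow_zero ε).symm)
  · simp only [if_neg hc]
    exact key_zero (sub_pos.mpr (hmax c hc)) ((hf a0).sub (hf c))

lemma gibbs_lim {f : ℝ → Bool × Bool → ℝ} {F : Bool × Bool → ℝ} {a0 : Bool × Bool}
    (hf : ∀ c, Tendsto (fun ε => f ε c) (𝓝[>] (0:ℝ)) (𝓝 (F c)))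
    (hmax : ∀ c, c ≠ a0 → F c < F a0) :
    Tendsto (fun ε : ℝ => ε ^ (-(f ε a0)) / ∑ c : Bool × Bool, ε ^ (-(f ε c)))
      (𝓝[>] (0:ℝ)) (𝓝 1) := by
  have h := (gibbs_sum_lim hf hmax).inv₀ one_ne_zero
  rw [inv_one] at h
  apply h.congr'
  filter_upwards [self_mem_nhdsWithin] with ε (hε : 0 < ε)
  have hterm : ∀ c, ε ^ (f ε a0 - f ε c) = ε ^ (-(f ε c)) / ε ^ (-(f ε a0)) := by
    intro c
    rw [← Real.rpow_sub hε]
    congr 1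
    ring
  simp only [hterm]
  rw [← Finset.sum_div, inv_div]

lemma gibbs_zero {f : ℝ → Bool × Bool → ℝ} {F : Bool × Bool → ℝ} {a0 b : Bool × Bool}
    (hf : ∀ c, Tendsto (fun ε => f ε c) (𝓝[>] (0:ℝ)) (𝓝 (F c)))
    (hmax : ∀ c, c ≠ a0 → F c < F a0) (hb : b ≠ a0) :
    Tendsto (fun ε : ℝ => ε ^ (-(f ε b)) / ∑ c : Bool × Bool, ε ^ (-(f ε c)))
      (𝓝[>] (0:ℝ)) (𝓝 0) := by
  have h1 := key_zero (sub_pos.mpr (hmax b hb)) ((hf a0).sub (hf b))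
  have h2 := gibbs_lim hf hmax
  have h := h1.mul h2
  rw [zero_mul] at h
  apply h.congr'
  filter_upwards [self_mem_nhdsWithin] with ε (hε : 0 < ε)
  rw [mul_div_assoc', ← Real.rpow_add hε]
  congr 2
  ring

lemma val_lim (s : Fin 3) (a0 : Bool × Bool)
    (hmax : ∀ c, c ≠ a0 → r2 s c < r2 s a0) :
    Tendsto (fun ε => ∑ c : Bool × Bool, pi2 ε s c * r2 s c) (𝓝[>] (0:ℝ)) (𝓝 (r2 s a0)) := by
  have h1 : r2 s a0 = ∑ c : Bool × Bool, (if c = a0 then (1:ℝ) else 0) * r2 s c := by simp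
  rw [h1]
  apply tendsto_finset_sum
  intro c _
  by_cases hc : c = a0
  · subst hc
    have := (gibbs_lim (f := fun _ => r2 s) (F := r2 s)
      (fun c => tendsto_const_nhds) hmax).mul_const (r2 s c)
    rw [one_mul] at this
    simpa [pi2] using this
  · have := (gibbs_zero (f := fun _ => r2 s) (F := r2 s)
      (fun c => tendsto_const_nhds) hmax hc).mul_const (r2 s c)
    rw [zero_mul] at this
    simpa [pi2, hc] using this

noncomputable def Qlim (a : Bool × Bool) : ℝ :=
  if a = (false, false) then 1.5 else if a = (true, true) then 2 else 1

lemma Q_lim (a : Bool × Bool) :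
    Tendsto (fun ε => Q1eps ε a) (𝓝[>] (0:ℝ)) (𝓝 (Qlim a)) := by
  rcases a with ⟨x, y⟩
  cases x <;> cases y
  · have h := val_lim 0 (false, false) (by
      rintro ⟨u, v⟩ h; cases u <;> cases v <;> simp [r2] at h ⊢ <;> norm_num)
    have := tendsto_const_nhds (x := r1 (false, false)) (f := 𝓝[>] (0:ℝ)) |>.add h
    simpa [Q1eps, Qlim, nextState, r1, r2, show (1.5:ℝ) = 1 + 0.5 by norm_num] using this
  · have h := val_lim 1 (false, false) (by
      rintro ⟨u, v⟩ h; cases u <;> cases v <;> simp [r2] at h ⊢ <;> norm_num)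
    have := tendsto_const_nhds (x := r1 (false, true)) (f := 𝓝[>] (0:ℝ)) |>.add h
    simpa [Q1eps, Qlim, nextState, r1, r2] using this
  · have h := val_lim 1 (false, false) (by
      rintro ⟨u, v⟩ h; cases u <;> cases v <;> simp [r2] at h ⊢ <;> norm_num)
    have := tendsto_const_nhds (x := r1 (true, false)) (f := 𝓝[>] (0:ℝ)) |>.add h
    simpa [Q1eps, Qlim, nextState, r1, r2] using this
  · have h := val_lim 2 (true, true) (by
      rintro ⟨u, v⟩ h; cases u <;> cases v <;> simp [r2] at h ⊢ <;> norm_num)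
    have := tendsto_const_nhds (x := r1 (true, true)) (f := 𝓝[>] (0:ℝ)) |>.add h
    simpa [Q1eps, Qlim, nextState, r1, r2] using this

/-- In the treasure-digging game, the stochastically stable policy of backward log-linear
learning is the globally optimal (potential-maximizing) equilibrium: as `ε → 0⁺`,
`π^ε` places probability `1` on action `(1,1)` at the initial state and at state `B`. -/
theorem stmt19 :
    Tendsto (fun ε => pi1 ε (true, true)) (nhdsWithin 0 (Set.Ioi (0 : ℝ))) (nhds 1) ∧
    Tendsto (fun ε => pi2 ε 2 (true, true)) (nhdsWithin 0 (Set.Ioi (0 : ℝ))) (nhds 1) := by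
  constructor
  · have := gibbs_lim (f := fun ε => Q1eps ε) (F := Qlim) (a0 := (true, true))
      Q_lim (by rintro ⟨u, v⟩ h; cases u <;> cases v <;> simp [Qlim] at h ⊢ <;> norm_num)
    exact this.congr (fun ε => rfl)
  · have := gibbs_lim (f := fun _ => r2 2) (F := r2 2) (a0 := (true, true))
      (fun c => tendsto_const_nhds)
      (by rintro ⟨u, v⟩ h; cases u <;> cases v <;> simp [r2] at h ⊢ <;> norm_num)
    exact this.congr (fun ε => rfl)
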